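/- If U is feasible for M-CLP with slack x(t)=β+bt−AU(t), P is feasible for M-CLP* with slack q(t)=γ+ct−AᵀP(t), and the complementary slackness conditions ∫₀ᵀ x(T−t)ᵀ dP(t) = 0 and ∫₀ᵀ q(T−t)ᵀ dU(t) = 0 hold, then U is optimal for M-CLP and P is optimal for M-CLP*. -/

import Mathlib

open MeasureTheory Set

noncomputable def mclpObj {n : ℕ} (T : ℝ) (g c : Fin n → ℝ)
    (U : Fin n → StieltjesFunction ℝ) : ℝ :=
  ∑ j, ∫ t in Icc (0:ℝ) T, (g j + (T - t) * c j) ∂(U j).measure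

def mclpFeasible {K J : ℕ} (A : Matrix (Fin K) (Fin J) ℝ) (β b : Fin K → ℝ)
    (T : ℝ) (U : Fin J → StieltjesFunction ℝ) : Prop :=
  (∀ j, ∀ t < (0:ℝ), U j t = 0) ∧ (∀ j t, 0 ≤ U j t) ∧
  ∀ t ∈ Icc (0:ℝ) T, ∀ k, (∑ j, A k j * U j t) ≤ β k + b k * t

def mclpDualFeasible {K J : ℕ} (A : Matrix (Fin K) (Fin J) ℝ) (γ c : Fin J → ℝ)
    (T : ℝ) (P : Fin K → StieltjesFunction ℝ) : Prop :=
  (∀ k, ∀ t < (0:ℝ), P k t = 0) ∧ (∀ k t, 0 ≤ P k t) ∧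
  ∀ t ∈ Icc (0:ℝ) T, ∀ j, γ j + c j * t ≤ ∑ k, A k j * P k t

section Aux
open Filter

-- leftLim at 0 of a Stieltjes function vanishing on negatives
lemma stj_leftLim_zero (F : StieltjesFunction ℝ) (hF : ∀ t < (0:ℝ), F t = 0) :
    Function.leftLim F 0 = 0 := by
  apply leftLim_eq_of_tendsto
  have h : ∀ᶠ t in nhdsWithin (0:ℝ) (Iio 0), F t = (0:ℝ) := by
    filter_upwards [self_mem_nhdsWithin] with t ht using hF t ht
  rw [tendsto_congr' h]
  exact tendsto_const_nhds

lemma stj_finite (F : StieltjesFunction ℝ) {T : ℝ} :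
    IsFiniteMeasure (F.measure.restrict (Icc (0:ℝ) T)) := by
  constructor
  rw [Measure.restrict_apply_univ, F.measure_Icc]
  exact ENNReal.ofReal_lt_top

lemma stj_nonneg (F : StieltjesFunction ℝ) (hF : ∀ t < (0:ℝ), F t = 0) (t : ℝ) :
    0 ≤ F t := by
  rcases lt_or_ge t 0 with h | h
  · exact (hF t h).ge
  · rw [← hF (-1) (by norm_num)]
    exact F.mono (by linarith)

-- main swap lemma (Fubini for Stieltjes measures)
lemma stj_swap (F G : StieltjesFunction ℝ) (hF : ∀ t < (0:ℝ), F t = 0)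
    (hG : ∀ t < (0:ℝ), G t = 0) {T : ℝ} :
    ∫ t in Icc (0:ℝ) T, F (T - t) ∂G.measure
      = ∫ t in Icc (0:ℝ) T, G (T - t) ∂F.measure := by
  haveI := stj_finite F (T := T)
  haveI := stj_finite G (T := T)
  set μ := F.measure.restrict (Icc (0:ℝ) T) with hμ
  set ν := G.measure.restrict (Icc (0:ℝ) T) with hν
  set S : Set (ℝ × ℝ) := {p : ℝ × ℝ | 0 ≤ p.1 ∧ 0 ≤ p.2 ∧ p.1 + p.2 ≤ T} with hS
  have hSm : MeasurableSet S := by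
    apply MeasurableSet.inter
    · exact measurableSet_le measurable_const measurable_fst
    apply MeasurableSet.inter
    · exact measurableSet_le measurable_const measurable_snd
    · exact measurableSet_le (measurable_fst.add measurable_snd) measurable_const
  have key : ∀ (H : StieltjesFunction ℝ), (∀ t < (0:ℝ), H t = 0) → ∀ t ∈ Icc (0:ℝ) T,
      (H.measure.restrict (Icc (0:ℝ) T)) (Icc 0 (T - t)) = ENNReal.ofReal (H (T - t)) := by
    intro H hH t ht
    rw [Measure.restrict_apply measurableSet_Icc,
      Icc_inter_Icc, max_self, min_eq_left (by linarith [ht.1]),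
      H.measure_Icc, stj_leftLim_zero H hH, sub_zero]
  have h1 : (μ.prod ν) S = ∫⁻ t in Icc (0:ℝ) T, ENNReal.ofReal (F (T - t)) ∂G.measure := by
    rw [Measure.prod_apply_symm hSm]
    apply setLIntegral_congr_fun measurableSet_Icc
    intro t ht
    have hpre : (fun x => (x, t)) ⁻¹' S = Icc 0 (T - t) := by
      ext x
      simp only [hS, mem_preimage, mem_setOf_eq, mem_Icc]
      constructor
      · rintro ⟨h1, h2, h3⟩; exact ⟨h1, by linarith⟩
      · rintro ⟨h1, h2⟩; exact ⟨h1, ht.1, by linarith⟩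
    beta_reduce
    rw [hpre, hμ, key F hF t ht]
  have h2 : (μ.prod ν) S = ∫⁻ t in Icc (0:ℝ) T, ENNReal.ofReal (G (T - t)) ∂F.measure := by
    rw [Measure.prod_apply hSm]
    apply setLIntegral_congr_fun measurableSet_Icc
    intro t ht
    have hpre : Prod.mk t ⁻¹' S = Icc 0 (T - t) := by
      ext x
      simp only [hS, mem_preimage, mem_setOf_eq, mem_Icc]
      constructor
      · rintro ⟨h1, h2, h3⟩; exact ⟨h2, by linarith⟩
      · rintro ⟨h1, h2⟩; exact ⟨ht.1, h1, by linarith⟩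
    beta_reduce
    rw [hpre, hν, key G hG t ht]
  have hconv : ∀ (H H' : StieltjesFunction ℝ), (∀ t < (0:ℝ), H t = 0) →
      ∫ t in Icc (0:ℝ) T, H (T - t) ∂H'.measure
        = (∫⁻ t in Icc (0:ℝ) T, ENNReal.ofReal (H (T - t)) ∂H'.measure).toReal := by
    intro H H' hH0
    rw [integral_eq_lintegral_of_nonneg_ae]
    · exact Filter.Eventually.of_forall fun t => stj_nonneg H hH0 _
    · have : Antitone (fun t => H (T - t)) := fun a b hab => H.mono (by linarith)
      exact (this.measurable).aestronglyMeasurable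
  rw [hconv F G hF, hconv G F hG, ← h1, ← h2]

-- integrability of bounded measurable functions against Stieltjes measures on Icc
lemma stj_integrableOn (G : StieltjesFunction ℝ) {T : ℝ} {f : ℝ → ℝ} (hf : Measurable f)
    {C : ℝ} (hC : ∀ t ∈ Icc (0:ℝ) T, |f t| ≤ C) :
    IntegrableOn f (Icc (0:ℝ) T) G.measure := by
  haveI := stj_finite G (T := T)
  refine Integrable.mono' (integrable_const C) hf.aestronglyMeasurable ?_
  filter_upwards [ae_restrict_mem measurableSet_Icc] with t ht
  exact hC t ht

lemma stj_int_comp (H H' : StieltjesFunction ℝ) (hH0 : ∀ t < (0:ℝ), H t = 0) {T : ℝ} :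
    IntegrableOn (fun t => H (T - t)) (Icc (0:ℝ) T) H'.measure := by
  have hmono : Antitone (fun t => H (T - t)) := fun a b hab => H.mono (by linarith)
  refine stj_integrableOn H' hmono.measurable (C := H T) ?_
  intro t ht
  rw [abs_of_nonneg (stj_nonneg H hH0 _)]
  exact H.mono (by linarith [ht.1])

lemma stj_int_lin (H' : StieltjesFunction ℝ) (a d : ℝ) {T : ℝ} :
    IntegrableOn (fun t => a + (T - t) * d) (Icc (0:ℝ) T) H'.measure := by
  refine stj_integrableOn H' (by fun_prop) (C := |a| + |T| * |d|) ?_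
  intro t ht
  calc |a + (T - t) * d| ≤ |a| + |(T - t) * d| := abs_add_le _ _
    _ = |a| + |T - t| * |d| := by rw [abs_mul]
    _ ≤ |a| + |T| * |d| := by
        have : |T - t| ≤ |T| := by
          rw [abs_of_nonneg (by linarith [ht.2] : (0:ℝ) ≤ T - t),
            abs_of_nonneg (le_trans ht.1 ht.2)]
          linarith [ht.1]
        nlinarith [abs_nonneg d]

lemma stj_int_sum {K J : ℕ} (A : Matrix (Fin K) (Fin J) ℝ) {T : ℝ}
    (Q : Fin K → StieltjesFunction ℝ) (hQ0 : ∀ k, ∀ t < (0:ℝ), Q k t = 0)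
    (V : StieltjesFunction ℝ) (j : Fin J) :
    IntegrableOn (fun t => ∑ k, A k j * Q k (T - t)) (Icc (0:ℝ) T) V.measure :=
  integrable_finset_sum _ fun k _ => (stj_int_comp (Q k) V (hQ0 k)).const_mul _

lemma stj_E_eq {K J : ℕ} (A : Matrix (Fin K) (Fin J) ℝ) (T : ℝ)
    (V : Fin J → StieltjesFunction ℝ) (Q : Fin K → StieltjesFunction ℝ)
    (hV0 : ∀ j, ∀ t < (0:ℝ), V j t = 0) (hQ0 : ∀ k, ∀ t < (0:ℝ), Q k t = 0) :
    ∑ j, ∫ t in Icc (0:ℝ) T, (∑ k, A k j * Q k (T - t)) ∂(V j).measure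
      = ∑ k, ∫ t in Icc (0:ℝ) T, (∑ j, A k j * V j (T - t)) ∂(Q k).measure := by
  have hL : ∀ j, ∫ t in Icc (0:ℝ) T, (∑ k, A k j * Q k (T - t)) ∂(V j).measure
      = ∑ k, A k j * ∫ t in Icc (0:ℝ) T, Q k (T - t) ∂(V j).measure := by
    intro j
    rw [integral_finset_sum _ fun k _ => (stj_int_comp (Q k) (V j) (hQ0 k)).const_mul _]
    exact Finset.sum_congr rfl fun k _ => integral_const_mul _ _
  have hR : ∀ k, ∫ t in Icc (0:ℝ) T, (∑ j, A k j * V j (T - t)) ∂(Q k).measure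
      = ∑ j, A k j * ∫ t in Icc (0:ℝ) T, V j (T - t) ∂(Q k).measure := by
    intro k
    rw [integral_finset_sum _ fun j _ => (stj_int_comp (V j) (Q k) (hV0 j)).const_mul _]
    exact Finset.sum_congr rfl fun j _ => integral_const_mul _ _
  calc ∑ j, ∫ t in Icc (0:ℝ) T, (∑ k, A k j * Q k (T - t)) ∂(V j).measure
      = ∑ j, ∑ k, A k j * ∫ t in Icc (0:ℝ) T, Q k (T - t) ∂(V j).measure :=
        Finset.sum_congr rfl fun j _ => hL j
    _ = ∑ j, ∑ k, A k j * ∫ t in Icc (0:ℝ) T, V j (T - t) ∂(Q k).measure := by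
        refine Finset.sum_congr rfl fun j _ => Finset.sum_congr rfl fun k _ => ?_
        rw [stj_swap (Q k) (V j) (hQ0 k) (hV0 j)]
    _ = ∑ k, ∑ j, A k j * ∫ t in Icc (0:ℝ) T, V j (T - t) ∂(Q k).measure :=
        Finset.sum_comm
    _ = ∑ k, ∫ t in Icc (0:ℝ) T, (∑ j, A k j * V j (T - t)) ∂(Q k).measure :=
        Finset.sum_congr rfl fun k _ => (hR k).symm

lemma stj_obj_le_E {K J : ℕ} (A : Matrix (Fin K) (Fin J) ℝ) (γ c : Fin J → ℝ)
    {T : ℝ} (hT : 0 ≤ T) (V : Fin J → StieltjesFunction ℝ) (Q : Fin K → StieltjesFunction ℝ)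
    (hQ0 : ∀ k, ∀ t < (0:ℝ), Q k t = 0)
    (hfeas : ∀ t ∈ Icc (0:ℝ) T, ∀ j, γ j + c j * t ≤ ∑ k, A k j * Q k t) :
    mclpObj T γ c V ≤ ∑ j, ∫ t in Icc (0:ℝ) T, (∑ k, A k j * Q k (T - t)) ∂(V j).measure := by
  apply Finset.sum_le_sum
  intro j _
  apply setIntegral_mono_on (stj_int_lin (V j) (γ j) (c j))
    (stj_int_sum A Q hQ0 (V j) j) measurableSet_Icc
  intro t ht
  have hmem : T - t ∈ Icc (0:ℝ) T := ⟨by linarith [ht.2], by linarith [ht.1]⟩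
  have := hfeas (T - t) hmem j
  calc γ j + (T - t) * c j = γ j + c j * (T - t) := by ring
    _ ≤ _ := this

lemma stj_E_le_obj {K J : ℕ} (A : Matrix (Fin K) (Fin J) ℝ) (β b : Fin K → ℝ)
    {T : ℝ} (hT : 0 ≤ T) (V : Fin J → StieltjesFunction ℝ) (Q : Fin K → StieltjesFunction ℝ)
    (hV0 : ∀ j, ∀ t < (0:ℝ), V j t = 0)
    (hfeas : ∀ t ∈ Icc (0:ℝ) T, ∀ k, (∑ j, A k j * V j t) ≤ β k + b k * t) :
    ∑ k, ∫ t in Icc (0:ℝ) T, (∑ j, A k j * V j (T - t)) ∂(Q k).measure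
      ≤ mclpObj T β b Q := by
  apply Finset.sum_le_sum
  intro k _
  apply setIntegral_mono_on
    (integrable_finset_sum _ fun j _ => (stj_int_comp (V j) (Q k) (hV0 j)).const_mul _)
    (stj_int_lin (Q k) (β k) (b k)) measurableSet_Icc
  intro t ht
  have hmem : T - t ∈ Icc (0:ℝ) T := ⟨by linarith [ht.2], by linarith [ht.1]⟩
  have := hfeas (T - t) hmem k
  calc (∑ j, A k j * V j (T - t)) ≤ β k + b k * (T - t) := this
    _ = β k + (T - t) * b k := by ring

lemma stj_weak {K J : ℕ} (A : Matrix (Fin K) (Fin J) ℝ) (β b : Fin K → ℝ)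
    (γ c : Fin J → ℝ) {T : ℝ} (hT : 0 ≤ T)
    (V : Fin J → StieltjesFunction ℝ) (Q : Fin K → StieltjesFunction ℝ)
    (hV : mclpFeasible A β b T V) (hQ : mclpDualFeasible A γ c T Q) :
    mclpObj T γ c V ≤ mclpObj T β b Q := by
  refine le_trans (stj_obj_le_E A γ c hT V Q hQ.1 hQ.2.2) ?_
  rw [stj_E_eq A T V Q hV.1 hQ.1]
  exact stj_E_le_obj A β b hT V Q hV.1 hV.2.2

end Aux

/-- Complementary slack feasible solutions of M-CLP/M-CLP* are optimal. -/
theorem mclp_compslack_optimal {K J : ℕ} (A : Matrix (Fin K) (Fin J) ℝ)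
    (β b : Fin K → ℝ) (γ c : Fin J → ℝ) (T : ℝ) (hT : 0 ≤ T)
    (U : Fin J → StieltjesFunction ℝ) (P : Fin K → StieltjesFunction ℝ)
    (hU : mclpFeasible A β b T U) (hP : mclpDualFeasible A γ c T P)
    -- primal slack x and dual slack q
    (x : Fin K → ℝ → ℝ) (hx : ∀ k s, x k s = β k + b k * s - ∑ j, A k j * U j s)
    (q : Fin J → ℝ → ℝ) (hq : ∀ j s, q j s = (∑ k, A k j * P k s) - γ j - c j * s)
    -- complementary slackness
    (hcs1 : (∑ k, ∫ t in Icc (0:ℝ) T, x k (T - t) ∂(P k).measure) = 0)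
    (hcs2 : (∑ j, ∫ t in Icc (0:ℝ) T, q j (T - t) ∂(U j).measure) = 0) :
    (∀ U' : Fin J → StieltjesFunction ℝ, mclpFeasible A β b T U' →
        mclpObj T γ c U' ≤ mclpObj T γ c U) ∧
    (∀ P' : Fin K → StieltjesFunction ℝ, mclpDualFeasible A γ c T P' →
        mclpObj T β b P ≤ mclpObj T β b P') := by
  obtain ⟨hU0, hUnn, hUfeas⟩ := hU
  obtain ⟨hP0, hPnn, hPfeas⟩ := hP
  -- splitting the dual-slack integrals
  have hqsplit : ∀ j, ∫ t in Icc (0:ℝ) T, q j (T - t) ∂(U j).measure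
      = (∫ t in Icc (0:ℝ) T, (∑ k, A k j * P k (T - t)) ∂(U j).measure)
        - ∫ t in Icc (0:ℝ) T, (γ j + (T - t) * c j) ∂(U j).measure := by
    intro j
    have hpt : (fun t => q j (T - t))
        = fun t => (∑ k, A k j * P k (T - t)) - (γ j + (T - t) * c j) := by
      funext t; rw [hq]; ring
    rw [hpt, integral_sub (stj_int_sum A P hP0 (U j) j) (stj_int_lin (U j) (γ j) (c j))]
  have hxsplit : ∀ k, ∫ t in Icc (0:ℝ) T, x k (T - t) ∂(P k).measure
      = (∫ t in Icc (0:ℝ) T, (β k + (T - t) * b k) ∂(P k).measure)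
        - ∫ t in Icc (0:ℝ) T, (∑ j, A k j * U j (T - t)) ∂(P k).measure := by
    intro k
    have hpt : (fun t => x k (T - t))
        = fun t => (β k + (T - t) * b k) - (∑ j, A k j * U j (T - t)) := by
      funext t; rw [hx]; ring
    rw [hpt, integral_sub (stj_int_lin (P k) (β k) (b k))
      (integrable_finset_sum _ fun j _ => (stj_int_comp (U j) (P k) (hU0 j)).const_mul _)]
  have e1 : (∑ j, ∫ t in Icc (0:ℝ) T, (∑ k, A k j * P k (T - t)) ∂(U j).measure)
      = mclpObj T γ c U := by
    have h0 := hcs2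
    rw [Finset.sum_congr rfl fun j _ => hqsplit j, Finset.sum_sub_distrib,
      sub_eq_zero] at h0
    exact h0
  have e2 : mclpObj T β b P
      = ∑ k, ∫ t in Icc (0:ℝ) T, (∑ j, A k j * U j (T - t)) ∂(P k).measure := by
    have h0 := hcs1
    rw [Finset.sum_congr rfl fun k _ => hxsplit k, Finset.sum_sub_distrib,
      sub_eq_zero] at h0
    exact h0
  have hobj : mclpObj T γ c U = mclpObj T β b P := by
    rw [← e1, stj_E_eq A T U P hU0 hP0, e2]
  constructor
  · intro U' hU'
    calc mclpObj T γ c U' ≤ mclpObj T β b P :=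
          stj_weak A β b γ c hT U' P hU' ⟨hP0, hPnn, hPfeas⟩
      _ = mclpObj T γ c U := hobj.symm
  · intro P' hP'
    calc mclpObj T β b P = mclpObj T γ c U := hobj.symm
      _ ≤ mclpObj T β b P' := stj_weak A β b γ c hT U P' ⟨hU0, hUnn, hUfeas⟩ hP'
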